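/- arXiv:0807.2819 — 4 statements merged into one kernel-verified Lean document; each statement's English description precedes it below -/
import Mathlib

section
/- Let 0 < α ≤ 1 and m ≥ 1 an integer, and let (d_k) be the solution of the recurrence d_k = 0 for k < m, ((k+2α)/2)·d_k = ((k-1)/2)·d_{k-1} + α·[k=m] for k ≥ m. Then there exists a constant C > 0 such that d_k ≤ C/k for all k ≥ 1. -/
theorem stmt_3 (α : ℝ) (hα0 : 0 < α) (hα1 : α ≤ 1) (m : ℕ) (hm : 1 ≤ m)
    (d : ℕ → ℝ)
    (h0 : ∀ k, k < m → d k = 0)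
    (hrec : ∀ k, m ≤ k →
      ((k : ℝ) + 2 * α) / 2 * d k =
        ((k : ℝ) - 1) / 2 * d (k - 1) + α * (if k = m then 1 else 0)) :
    ∃ C : ℝ, 0 < C ∧ ∀ k : ℕ, 1 ≤ k → d k ≤ C / k := by
  -- key invariant: for k ≥ m, 0 ≤ d k and k * d k ≤ 2α
  have key : ∀ n : ℕ, 0 ≤ d (m + n) ∧ ((m + n : ℕ) : ℝ) * d (m + n) ≤ 2 * α := by
    intro n
    induction n with
    | zero =>
      have h := hrec m le_rfl
      simp only [Nat.add_zero]
      have hd0 : d (m - 1) = 0 := h0 _ (Nat.sub_lt (by omega) one_pos)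
      rw [hd0, if_pos rfl] at h
      have hmpos : (0:ℝ) < (m:ℝ) + 2 * α := by positivity
      have hdm : d m = 2 * α / ((m:ℝ) + 2 * α) := by
        rw [eq_div_iff (ne_of_gt hmpos)]; linarith
      constructor
      · rw [hdm]; positivity
      · rw [hdm, ← mul_div_assoc, div_le_iff₀ hmpos]
        have hm1 : (1:ℝ) ≤ (m:ℝ) := by exact_mod_cast hm
        nlinarith
    | succ n ih =>
      obtain ⟨ih0, ih1⟩ := ih
      have h := hrec (m + (n + 1)) (by omega)
      rw [if_neg (by omega)] at h
      have hsub : m + (n + 1) - 1 = m + n := by omega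
      rw [hsub] at h
      have hc : ((m + (n + 1) : ℕ) : ℝ) = (m:ℝ) + n + 1 := by push_cast; ring
      have hc2 : ((m + n : ℕ) : ℝ) = (m:ℝ) + n := by push_cast; ring
      rw [hc] at h
      have hm1 : (1:ℝ) ≤ (m:ℝ) := by exact_mod_cast hm
      have hn0 : (0:ℝ) ≤ (n:ℝ) := Nat.cast_nonneg n
      have hpos : (0:ℝ) < (m:ℝ) + n + 1 + 2 * α := by positivity
      have hdk : d (m + (n + 1)) =
          ((m:ℝ) + n) * d (m + n) / ((m:ℝ) + n + 1 + 2 * α) := by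
        rw [eq_div_iff (ne_of_gt hpos)]; linarith
      rw [hc2] at ih1
      constructor
      · rw [hdk]
        apply div_nonneg _ (le_of_lt hpos)
        nlinarith
      · rw [hc, hdk, ← mul_div_assoc, div_le_iff₀ hpos]
        nlinarith
  refine ⟨2 * α, by positivity, fun k hk => ?_⟩
  rcases lt_or_ge k m with hkm | hkm
  · rw [h0 k hkm]
    positivity
  · obtain ⟨n, rfl⟩ := Nat.exists_eq_add_of_le hkm
    obtain ⟨_, h2⟩ := key n
    have hkpos : (0:ℝ) < ((m + n : ℕ) : ℝ) := by
      exact_mod_cast Nat.lt_of_lt_of_le Nat.zero_lt_one hk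
    rw [le_div_iff₀ hkpos]
    linarith [h2]
end

section
/- Let 0 < α ≤ 1 and m ≥ 1 an integer, and let (d_k) be the solution of d_k = 0 for k < m, ((k+2α)/2)·d_k = ((k-1)/2)·d_{k-1} + α·[k=m] for k ≥ m. Then ∑_{k=m}^{∞} d_k = 1; in particular (d_k) is a probability distribution on the integers k ≥ m. -/
open Filter Finset

theorem stmt_4 (α : ℝ) (hα0 : 0 < α) (hα1 : α ≤ 1) (m : ℕ) (hm : 1 ≤ m)
    (d : ℕ → ℝ)
    (h0 : ∀ k, k < m → d k = 0)
    (hrec : ∀ k, m ≤ k →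
      ((k : ℝ) + 2 * α) / 2 * d k =
        ((k : ℝ) - 1) / 2 * d (k - 1) + α * (if k = m then 1 else 0)) :
    ∑' k : ℕ, d (m + k) = 1 := by
  have h2α : (0:ℝ) < 2*α := by linarith
  have hd0 : d (m-1) = 0 := h0 _ (by omega)
  have hbase : ((m:ℝ) + 2*α) * d m = 2*α := by
    have h := hrec m le_rfl
    rw [if_pos rfl, hd0] at h
    linear_combination 2*h
  have hstep : ∀ n : ℕ, ((m:ℝ)+n+1+2*α) * d (m+(n+1)) = ((m:ℝ)+n) * d (m+n) := by
    intro n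
    have h := hrec (m+n+1) (by omega)
    rw [if_neg (by omega)] at h
    have h1 : m+n+1-1 = m+n := by omega
    rw [h1] at h
    push_cast at h
    have h2 : m + (n+1) = m+n+1 := by omega
    rw [h2]
    linear_combination 2*h
  have hnn : ∀ n, 0 ≤ d (m+n) := by
    intro n
    induction n with
    | zero =>
      simp only [Nat.add_zero]
      have hden : (0:ℝ) < (m:ℝ) + 2*α := by positivity
      nlinarith [hbase]
    | succ n ih =>
      have h := hstep n
      have hden : (0:ℝ) < (m:ℝ)+n+1+2*α := by positivity
      nlinarith
  have htel : ∀ N : ℕ, 2*α * ∑ k ∈ Finset.range (N+1), d (m+k)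
      = 2*α - ((m:ℝ)+N) * d (m+N) := by
    intro N
    induction N with
    | zero =>
      simp only [zero_add, Finset.sum_range_one, Nat.add_zero, Nat.cast_zero, add_zero]
      linear_combination hbase
    | succ N ih =>
      rw [Finset.sum_range_succ, mul_add, ih]
      have h := hstep N
      have e : m+(N+1) = m+N+1 := rfl
      rw [e] at h
      simp only [e]
      push_cast
      linear_combination h
  have hsum_le : ∀ n, ∑ k ∈ Finset.range n, d (m+k) ≤ 1 := by
    intro n
    cases n with
    | zero => simp
    | succ N =>
      have h := htel N
      have h1 : 0 ≤ ((m:ℝ)+N) * d (m+N) :=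
        mul_nonneg (by positivity) (hnn N)
      nlinarith
  have hsummable : Summable (fun k => d (m+k)) :=
    summable_of_sum_range_le hnn hsum_le
  set S := ∑' k : ℕ, d (m+k) with hSdef
  have hS : HasSum (fun k => d (m+k)) S := hsummable.hasSum
  have h1 : Tendsto (fun N : ℕ => ∑ k ∈ Finset.range (N+1), d (m+k)) atTop (nhds S) :=
    hS.tendsto_sum_nat.comp (tendsto_add_atTop_nat 1)
  have h2 : Tendsto (fun N : ℕ => 2*α - 2*α * ∑ k ∈ Finset.range (N+1), d (m+k))
      atTop (nhds (2*α - 2*α*S)) :=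
    tendsto_const_nhds.sub (h1.const_mul (2*α))
  have htend : Tendsto (fun N : ℕ => ((m:ℝ)+N) * d (m+N)) atTop (nhds (2*α - 2*α*S)) := by
    apply h2.congr
    intro N
    have := htel N
    linarith
  have hL0 : 0 ≤ 2*α - 2*α*S := by
    refine ge_of_tendsto' htend ?_
    intro N
    exact mul_nonneg (by positivity) (hnn N)
  have hLle : ¬ (0 < 2*α - 2*α*S) := by
    intro hpos
    set L := 2*α - 2*α*S with hLdef
    have hev : ∀ᶠ N in atTop, L/2 ≤ ((m:ℝ)+N) * d (m+N) :=
      htend.eventually (eventually_ge_nhds (by linarith))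
    obtain ⟨N₀, hN₀⟩ := eventually_atTop.1 hev
    have hsum2 : Summable (fun N => d (m+(N+N₀))) :=
      (summable_nat_add_iff N₀).2 hsummable
    have hcmp : Summable (fun N : ℕ => L/2 * ((m:ℝ)+(N+N₀))⁻¹) := by
      apply Summable.of_nonneg_of_le _ _ hsum2
      · intro n
        positivity
      · intro n
        have hge := hN₀ (n+N₀) (by omega)
        have hpos' : (0:ℝ) < (m:ℝ)+(n+N₀) := by positivity
        rw [mul_inv_le_iff₀ hpos', mul_comm]
        push_cast at hge ⊢
        linarith
    have hcmp2 : Summable (fun N : ℕ => ((m:ℝ)+(N+N₀))⁻¹) := by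
      have hne : L/2 ≠ 0 := by positivity
      exact (summable_mul_left_iff hne).1 hcmp
    have hcmp3 : Summable (fun N : ℕ => ((N + (N₀+m) : ℕ) : ℝ)⁻¹) := by
      apply hcmp2.congr
      intro n
      push_cast
      ring_nf
    have : Summable (fun n : ℕ => (n:ℝ)⁻¹) :=
      (summable_nat_add_iff (N₀+m)).1 hcmp3
    exact Real.not_summable_natCast_inv this
  have hSeq : S = 1 := by
    have : 2*α - 2*α*S = 0 := by
      by_contra h
      exact hLle (lt_of_le_of_ne hL0 (Ne.symm h))
    have h2α' : (2*α) ≠ 0 := ne_of_gt h2α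
    field_simp at this
    nlinarith
  exact hSeq
end

section
/- Let α be real with 1/2 < α ≤ 1 and m ≥ 1 an integer, and let d_k = 2α·Γ(k)·Γ(m+2α)/(Γ(m)·Γ(k+1+2α)) for k ≥ m. Then ∑_{k=m}^{∞} k·d_k = 2αm/(2α−1). -/
open Real Filter Topology

theorem stmt_6 (α : ℝ) (hα0 : 1 / 2 < α) (hα1 : α ≤ 1) (m : ℕ) (hm : 1 ≤ m)
    (d : ℕ → ℝ)
    (hd : ∀ k, m ≤ k →
      d k = 2 * α * Real.Gamma k * Real.Gamma ((m : ℝ) + 2 * α) /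
        (Real.Gamma m * Real.Gamma ((k : ℝ) + 1 + 2 * α))) :
    ∑' k : ℕ, ((m + k : ℕ) : ℝ) * d (m + k) = 2 * α * m / (2 * α - 1) := by
  have hm1 : (1:ℝ) ≤ (m:ℝ) := by exact_mod_cast hm
  have hs1 : (1:ℝ) < 2 * α := by linarith
  have hs2 : 2 * α ≤ 2 := by linarith
  set s : ℝ := 2 * α with hs
  have hspos : 0 < s := by linarith
  have hsne : s - 1 ≠ 0 := ne_of_gt (by linarith)
  set g : ℕ → ℝ := fun n => Real.Gamma ((n:ℝ) + m + 1) / Real.Gamma ((n:ℝ) + m + s)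
    with hgdef
  set C : ℝ := s * Real.Gamma ((m:ℝ) + s) / (Real.Gamma m * (s - 1)) with hCdef
  have hΓm : 0 < Real.Gamma (m:ℝ) := Real.Gamma_pos_of_pos (by linarith)
  have hΓms : 0 < Real.Gamma ((m:ℝ) + s) := Real.Gamma_pos_of_pos (by linarith)
  -- per-term identity
  have hterm : ∀ n : ℕ, ((m + n : ℕ) : ℝ) * d (m + n) = C * (g n - g (n + 1)) := by
    intro n
    have hn0 : (0:ℝ) ≤ (n:ℝ) := Nat.cast_nonneg n
    rw [hd (m + n) (Nat.le_add_right m n)]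
    have hx : ((m + n : ℕ) : ℝ) = (n:ℝ) + m := by push_cast; ring
    set x : ℝ := (n:ℝ) + m with hxdef
    have hx1 : (1:ℝ) ≤ x := by rw [hxdef]; linarith
    have hΓx : 0 < Real.Gamma x := Real.Gamma_pos_of_pos (by linarith)
    have hΓxs : 0 < Real.Gamma (x + s) := Real.Gamma_pos_of_pos (by linarith)
    have hg1 : g n = x * Real.Gamma x / Real.Gamma (x + s) := by
      simp only [hgdef]
      rw [show (n:ℝ) + m + 1 = x + 1 from by rw [hxdef],
          show (n:ℝ) + m + s = x + s from by rw [hxdef],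
          Real.Gamma_add_one (by linarith)]
    have hg2 : g (n+1) = (x+1) * (x * Real.Gamma x) / ((x+s) * Real.Gamma (x + s)) := by
      simp only [hgdef]
      push_cast
      rw [show (n:ℝ) + 1 + m + 1 = (x + 1) + 1 from by rw [hxdef]; ring,
          show (n:ℝ) + 1 + m + s = (x + s) + 1 from by rw [hxdef]; ring,
          Real.Gamma_add_one (show (x:ℝ) + 1 ≠ 0 by positivity),
          Real.Gamma_add_one (show (x:ℝ) + s ≠ 0 by positivity),
          Real.Gamma_add_one (show (x:ℝ) ≠ 0 by positivity)]
    have hΓ1s : Real.Gamma (((m+n:ℕ):ℝ) + 1 + s) = (x + s) * Real.Gamma (x + s) := by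
      rw [hx, show x + 1 + s = (x + s) + 1 by ring,
        Real.Gamma_add_one (show (x:ℝ) + s ≠ 0 by positivity)]
    rw [hΓ1s, hg1, hg2, hx, hCdef]
    have h1 : Real.Gamma (m:ℝ) ≠ 0 := ne_of_gt hΓm
    have h2 : Real.Gamma (x + s) ≠ 0 := ne_of_gt hΓxs
    have h3 : x + s ≠ 0 := by positivity
    field_simp
    ring
  -- monotonicity
  have hgmono : ∀ n : ℕ, g (n + 1) ≤ g n := by
    intro n
    have hn0 : (0:ℝ) ≤ (n:ℝ) := Nat.cast_nonneg n
    have hΓx : 0 < Real.Gamma ((n:ℝ) + m + 1) := Real.Gamma_pos_of_pos (by linarith)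
    have hΓxs : 0 < Real.Gamma ((n:ℝ) + m + s) := Real.Gamma_pos_of_pos (by linarith)
    simp only [hgdef]
    push_cast
    rw [show (n:ℝ) + 1 + (m:ℝ) + 1 = ((n:ℝ) + m + 1) + 1 by ring,
      show (n:ℝ) + 1 + (m:ℝ) + s = ((n:ℝ) + m + s) + 1 by ring,
      Real.Gamma_add_one (show (n:ℝ) + m + 1 ≠ 0 by positivity),
      Real.Gamma_add_one (show (n:ℝ) + m + s ≠ 0 by positivity)]
    rw [div_le_div_iff₀ (by positivity) (by positivity)]
    have hab : ((n:ℝ) + m + 1) ≤ ((n:ℝ) + m + s) := by linarith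
    nlinarith [mul_pos hΓx hΓxs]
  have hgpos : ∀ n : ℕ, 0 ≤ g n := by
    intro n
    have hn0 : (0:ℝ) ≤ (n:ℝ) := Nat.cast_nonneg n
    have hΓx : 0 < Real.Gamma ((n:ℝ) + m + 1) := Real.Gamma_pos_of_pos (by linarith)
    have hΓxs : 0 < Real.Gamma ((n:ℝ) + m + s) := Real.Gamma_pos_of_pos (by linarith)
    simp only [hgdef]
    positivity
  -- upper bound via log-convexity (Gautschi-type)
  have hgbound : ∀ n : ℕ, g n ≤ 2 ^ (2 - s) * ((n:ℝ) + m + 1) ^ (1 - s) := by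
    intro n
    have hn0 : (0:ℝ) ≤ (n:ℝ) := Nat.cast_nonneg n
    set y : ℝ := (n:ℝ) + m + 1 with hydef
    have hy1 : (2:ℝ) ≤ y := by rw [hydef]; linarith
    have hy0 : (0:ℝ) < y := by linarith
    set t : ℝ := s - 1 with htdef
    have ht0 : 0 < t := by rw [htdef]; linarith
    have ht1 : t ≤ 1 := by rw [htdef]; linarith
    have hΓy : 0 < Real.Gamma y := Real.Gamma_pos_of_pos hy0
    have hΓyt : 0 < Real.Gamma (y + t) := Real.Gamma_pos_of_pos (by linarith)
    have hconv := Real.convexOn_log_Gamma.2 (Set.mem_Ioi.mpr (show (0:ℝ) < y + t by linarith))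
      (Set.mem_Ioi.mpr (show (0:ℝ) < y + 1 + t by linarith))
      (le_of_lt ht0) (by linarith : (0:ℝ) ≤ 1 - t) (by ring)
    have hcomb : t • (y + t) + (1 - t) • (y + 1 + t) = y + 1 := by
      simp only [smul_eq_mul]; ring
    rw [hcomb] at hconv
    simp only [Function.comp, smul_eq_mul] at hconv
    have e5 : Real.Gamma (y + 1 + t) = (y + t) * Real.Gamma (y + t) := by
      rw [show y + 1 + t = (y + t) + 1 by ring, Real.Gamma_add_one (by positivity)]
    rw [e5, Real.log_mul (by positivity) (by positivity)] at hconv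
    have hkey : Real.Gamma (y + 1) ≤ Real.Gamma (y + t) * (y + t) ^ (1 - t) := by
      have h1 : Real.log (Real.Gamma (y + 1)) ≤
          Real.log (Real.Gamma (y + t) * (y + t) ^ (1 - t)) := by
        rw [Real.log_mul (by positivity) (by positivity),
          Real.log_rpow (by positivity)]
        nlinarith
      have h2 := Real.exp_le_exp.mpr h1
      rwa [Real.exp_log (Real.Gamma_pos_of_pos (by linarith)),
        Real.exp_log (by positivity)] at h2
    have hGy1 : Real.Gamma (y + 1) = y * Real.Gamma y := Real.Gamma_add_one (by positivity)
    have hgn : g n = Real.Gamma y / Real.Gamma (y + t) := by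
      simp only [hgdef]
      rw [show (n:ℝ) + m + 1 = y from by rw [hydef],
          show (n:ℝ) + m + s = y + t from by rw [hydef, htdef]; ring]
    have step1 : Real.Gamma y / Real.Gamma (y + t) ≤ (y + t) ^ (1 - t) / y := by
      rw [div_le_div_iff₀ (by positivity) (by positivity)]
      calc Real.Gamma y * y = Real.Gamma (y + 1) := by rw [hGy1]; ring
        _ ≤ Real.Gamma (y + t) * (y + t) ^ (1 - t) := hkey
        _ = (y + t) ^ (1 - t) * Real.Gamma (y + t) := by ring
    have h4 : y ^ (-t) = y ^ (1 - t) / y := by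
      rw [show (-t) = (1 - t) - 1 by ring, Real.rpow_sub hy0, Real.rpow_one]
    calc g n = Real.Gamma y / Real.Gamma (y + t) := hgn
      _ ≤ (y + t) ^ (1 - t) / y := step1
      _ ≤ (2 * y) ^ (1 - t) / y := by
          gcongr
          · linarith
      _ = 2 ^ (1 - t) * (y ^ (1 - t) / y) := by
          rw [Real.mul_rpow (by norm_num) (le_of_lt hy0)]; ring
      _ = 2 ^ (1 - t) * y ^ (-t) := by rw [h4]
      _ = 2 ^ (2 - s) * ((n:ℝ) + m + 1) ^ (1 - s) := by
          rw [show (1:ℝ) - t = 2 - s from by rw [htdef]; ring,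
            show -t = 1 - s from by rw [htdef]; ring, hydef]
  have hgtendsto : Tendsto g atTop (𝓝 0) := by
    have h1 : Tendsto (fun n : ℕ => ((n:ℝ) + m + 1)) atTop atTop := by
      apply tendsto_atTop_add_const_right
      apply tendsto_atTop_add_const_right
      exact tendsto_natCast_atTop_atTop
    have h2 : Tendsto (fun x : ℝ => x ^ (1 - s)) atTop (𝓝 0) := by
      have := tendsto_rpow_neg_atTop (show 0 < s - 1 by linarith)
      simpa [show -(s-1) = 1 - s by ring] using this
    have hb := (h2.comp h1).const_mul ((2:ℝ) ^ (2 - s))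
    rw [mul_zero] at hb
    exact squeeze_zero hgpos hgbound hb
  have hnonneg : ∀ n : ℕ, 0 ≤ g n - g (n + 1) := fun n => sub_nonneg.mpr (hgmono n)
  have hHasSum : HasSum (fun n : ℕ => g n - g (n + 1)) (g 0) := by
    rw [hasSum_iff_tendsto_nat_of_nonneg hnonneg]
    have hps : ∀ n : ℕ, ∑ i ∈ Finset.range n, (g i - g (i + 1)) = g 0 - g n :=
      fun n => Finset.sum_range_sub' g n
    simp only [hps]
    simpa using (tendsto_const_nhds.sub hgtendsto)
  have hmain : HasSum (fun n : ℕ => ((m + n : ℕ) : ℝ) * d (m + n)) (C * g 0) :=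
    (hHasSum.mul_left C).congr_fun fun n => hterm n
  rw [hmain.tsum_eq]
  have hg0 : g 0 = (m:ℝ) * Real.Gamma m / Real.Gamma ((m:ℝ) + s) := by
    simp only [hgdef]
    norm_num
    rw [Real.Gamma_add_one (show (m:ℝ) ≠ 0 by positivity)]
  rw [hg0, hCdef]
  have h1 : Real.Gamma (m:ℝ) ≠ 0 := ne_of_gt hΓm
  have h2 : Real.Gamma ((m:ℝ) + s) ≠ 0 := ne_of_gt hΓms
  field_simp
end

section
/- Let 1/2 < α ≤ 1, m ≥ 1 an integer, and let (x_t)_{t≥2} be a sequence of reals satisfying x_{t+1} = x_t·(1 + 2(1−α)/t) + αm for all t ≥ 2. Set μ = αm/(2α−1). Then there is a constant C > 0 such that |x_t − μt| ≤ C·t^{2(1−α)} for all t ≥ 2. -/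
theorem stmt_10 (α : ℝ) (hα0 : 1 / 2 < α) (hα1 : α ≤ 1) (m : ℕ) (hm : 1 ≤ m)
    (x : ℕ → ℝ)
    (hrec : ∀ t : ℕ, 2 ≤ t → x (t + 1) = x t * (1 + 2 * (1 - α) / t) + α * m) :
    ∃ C : ℝ, 0 < C ∧ ∀ t : ℕ, 2 ≤ t →
      |x t - (α * m / (2 * α - 1)) * t| ≤ C * (t : ℝ) ^ (2 * (1 - α)) := by
  set c : ℝ := 2 * (1 - α) with hc
  have hc0 : 0 ≤ c := by rw [hc]; linarith
  have hd : (0:ℝ) < 2 * α - 1 := by linarith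
  set μ : ℝ := α * m / (2 * α - 1) with hμ
  have hμid : μ * (2 * α - 1) = α * m := by
    rw [hμ]; exact div_mul_cancel₀ _ hd.ne'
  set η : ℕ → ℝ := fun t => x t - μ * t with hη
  have hηrec : ∀ t : ℕ, 2 ≤ t → η (t + 1) = η t * (1 + c / t) := by
    intro t ht
    have ht0 : (0:ℝ) < (t:ℝ) := by positivity
    have hx := hrec t ht
    simp only [hη]
    push_cast
    rw [hx]
    have hab : α * (m:ℝ) - μ = -(μ * c) := by
      rw [hc]; linear_combination -hμid
    field_simp
    linear_combination (t:ℝ) * hab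
  set A : ℝ := |η 2| with hA
  have hA0 : 0 ≤ A := abs_nonneg _
  have key : ∀ t : ℕ, 2 ≤ t → |η t| ≤ A * ((t:ℝ) - 1) ^ c := by
    intro t ht
    induction t, ht using Nat.le_induction with
    | base => norm_num [hA]
    | succ t ht ih =>
      have ht0 : (0:ℝ) < (t:ℝ) := by positivity
      have ht2 : (2:ℝ) ≤ (t:ℝ) := by exact_mod_cast ht
      have ht1' : (0:ℝ) < (t:ℝ) - 1 := by linarith
      have hpos1 : (0:ℝ) < 1 + c / (t:ℝ) := by
        have : (0:ℝ) ≤ c / (t:ℝ) := div_nonneg hc0 ht0.le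
        linarith
      have habs : |η (t+1)| = |η t| * (1 + c / t) := by
        rw [hηrec t ht, abs_mul, abs_of_pos hpos1]
      have hexp1 : Real.exp (1 / (t:ℝ)) ≤ (t:ℝ) / ((t:ℝ) - 1) := by
        have h1 : ((t:ℝ) - 1) / (t:ℝ) ≤ (Real.exp (1 / (t:ℝ)))⁻¹ := by
          rw [← Real.exp_neg]
          have h2 := Real.add_one_le_exp (-(1 / (t:ℝ)))
          have h3 : ((t:ℝ) - 1) / (t:ℝ) = -(1 / (t:ℝ)) + 1 := by field_simp; ring
          linarith [h2, h3.le, h3.ge]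
        have hpos : (0:ℝ) < ((t:ℝ) - 1) / (t:ℝ) := by positivity
        have := (le_inv_comm₀ hpos (Real.exp_pos _)).1 h1
        rwa [inv_div] at this
      have hstep : 1 + c / (t:ℝ) ≤ ((t:ℝ) / ((t:ℝ) - 1)) ^ c := by
        have h1 : 1 + c / (t:ℝ) ≤ Real.exp (c / (t:ℝ)) := by
          have := Real.add_one_le_exp (c / (t:ℝ)); linarith
        have h2 : Real.exp (c / (t:ℝ)) = Real.exp (1 / (t:ℝ)) ^ c := by
          rw [← Real.exp_mul]; ring_nf
        have h3 : Real.exp (1 / (t:ℝ)) ^ c ≤ ((t:ℝ) / ((t:ℝ) - 1)) ^ c :=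
          Real.rpow_le_rpow (Real.exp_pos _).le hexp1 hc0
        linarith [h2.le, h2.ge]
      have hmulrp : ((t:ℝ) - 1) ^ c * ((t:ℝ) / ((t:ℝ) - 1)) ^ c = (t:ℝ) ^ c := by
        rw [← Real.mul_rpow ht1'.le (by positivity)]
        congr 1
        field_simp
      calc |η (t+1)| = |η t| * (1 + c / t) := habs
        _ ≤ (A * ((t:ℝ) - 1) ^ c) * (1 + c / t) := by
            exact mul_le_mul_of_nonneg_right ih hpos1.le
        _ ≤ (A * ((t:ℝ) - 1) ^ c) * (((t:ℝ) / ((t:ℝ) - 1)) ^ c) := by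
            apply mul_le_mul_of_nonneg_left hstep; positivity
        _ = A * (t:ℝ) ^ c := by rw [mul_assoc, hmulrp]
        _ = A * ((((t:ℕ)+1:ℕ):ℝ) - 1) ^ c := by push_cast; ring_nf
  refine ⟨A + 1, by linarith, fun t ht => ?_⟩
  have ht0 : (0:ℝ) < (t:ℝ) := by positivity
  have ht2 : (2:ℝ) ≤ (t:ℝ) := by exact_mod_cast ht
  have h1 : ((t:ℝ) - 1) ^ c ≤ (t:ℝ) ^ c :=
    Real.rpow_le_rpow (by linarith) (by linarith) hc0
  have h2 : (0:ℝ) < (t:ℝ) ^ c := Real.rpow_pos_of_pos ht0 c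
  have h3 := key t ht
  have : |x t - μ * t| ≤ A * (t:ℝ) ^ c := by
    calc |x t - μ * t| = |η t| := rfl
      _ ≤ A * ((t:ℝ) - 1) ^ c := h3
      _ ≤ A * (t:ℝ) ^ c := by apply mul_le_mul_of_nonneg_left h1 hA0
  calc |x t - μ * t| ≤ A * (t:ℝ) ^ c := this
    _ ≤ (A + 1) * (t:ℝ) ^ c := by nlinarith
end
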